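/- Let n ≥ 3, let L be the discrete periodic Laplacian, A_σ = I − σL, and B = diag(1, …, 1, −1). Let σ₁, σ₂ ≥ 0 with σ₁ ≠ σ₂, and let p, q ∈ ℝⁿ be nonzero vectors with A_{σ₁}^{-1} B p = λ₁ p and A_{σ₂}^{-1} B q = λ₂ q for some negative eigenvalues λ₁ < 0 and λ₂ < 0. Then the Euclidean inner product ⟨p, q⟩ is nonzero; i.e., eigenvectors corresponding to the unique negative eigenvalue at two different smoothing parameters are never orthogonal. -/
import Mathlib


open Matrix Polynomial

/-- The discrete one-dimensional Laplacian with periodic boundary conditions: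
the circulant matrix whose first column is `(-2, 1, 0, …, 0, 1)ᵀ`. -/
noncomputable def Lmat (n : ℕ) : Matrix (Fin n) (Fin n) ℝ :=
  Matrix.circulant (fun i : Fin n =>
    if (i : ℕ) = 0 then -2 else if (i : ℕ) = 1 ∨ (i : ℕ) = n - 1 then 1 else 0)

/-- The Laplacian smoothing matrix `A_σ = I - σ L`. -/
noncomputable def Amat (n : ℕ) (σ : ℝ) : Matrix (Fin n) (Fin n) ℝ :=
  1 - σ • Lmat n

/-- The matrix `B = diag(1, …, 1, -1)`. -/
noncomputable def Bmat (n : ℕ) : Matrix (Fin n) (Fin n) ℝ :=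
  Matrix.diagonal (fun i : Fin n => if (i : ℕ) = n - 1 then -1 else 1)

lemma S_le (n : ℕ) (hn : 3 ≤ n) (x : Fin n → ℝ) (k : Fin n) :
    ∑ i, x i * x (i - k) ≤ ∑ i, x i ^ 2 := by
  haveI : NeZero n := ⟨by omega⟩
  have h1 : ∑ i, (2 * (x i * x (i - k))) ≤ ∑ i, ((x i) ^ 2 + (x (i - k)) ^ 2) := by
    apply Finset.sum_le_sum
    intro i _
    nlinarith [sq_nonneg (x i - x (i - k))]
  have h2 : ∑ i, (x (i - k)) ^ 2 = ∑ i, x i ^ 2 :=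
    Fintype.sum_equiv (Equiv.subRight k) _ _ (fun i => rfl)
  rw [← Finset.mul_sum, Finset.sum_add_distrib, h2] at h1
  linarith

lemma quad_L (n : ℕ) (hn : 3 ≤ n) (x : Fin n → ℝ) :
    x ⬝ᵥ (Lmat n).mulVec x ≤ 0 := by
  haveI : NeZero n := ⟨by omega⟩
  set c : Fin n → ℝ := fun i : Fin n =>
    if (i : ℕ) = 0 then -2 else if (i : ℕ) = 1 ∨ (i : ℕ) = n - 1 then 1 else 0 with hc
  set S : Fin n → ℝ := fun k => ∑ i, x i * x (i - k) with hS
  set e0 : Fin n := ⟨0, by omega⟩ with he0def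
  set e1 : Fin n := ⟨1, by omega⟩ with he1def
  set e2 : Fin n := ⟨n - 1, by omega⟩ with he2def
  have v0 : (e0 : ℕ) = 0 := rfl
  have v1 : (e1 : ℕ) = 1 := rfl
  have v2 : (e2 : ℕ) = n - 1 := rfl
  have ne01 : e0 ≠ e1 := by rw [Ne, Fin.ext_iff, v0, v1]; omega
  have ne02 : e0 ≠ e2 := by rw [Ne, Fin.ext_iff, v0, v2]; omega
  have ne12 : e1 ≠ e2 := by rw [Ne, Fin.ext_iff, v1, v2]; omega
  have key : x ⬝ᵥ (Lmat n).mulVec x = ∑ k, c k * S k := by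
    have hre : ∀ i : Fin n, (∑ j, c (i - j) * x j) = ∑ k, c k * x (i - k) := by
      intro i
      exact Fintype.sum_equiv (Equiv.subLeft i) _ _ (fun j => by simp)
    simp only [dotProduct, mulVec, Lmat, circulant_apply, ← hc]
    calc ∑ i, x i * ∑ j, c (i - j) * x j = ∑ i, ∑ k, x i * (c k * x (i - k)) := by
          refine Finset.sum_congr rfl fun i _ => ?_
          rw [hre i, Finset.mul_sum]
      _ = ∑ k, ∑ i, x i * (c k * x (i - k)) := Finset.sum_comm
      _ = ∑ k, c k * S k := by
          refine Finset.sum_congr rfl fun k _ => ?_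
          rw [hS, Finset.mul_sum]
          exact Finset.sum_congr rfl fun i _ => by ring
  have split : ∀ k : Fin n, c k * S k =
      (if k = e0 then -2 * S e0 else 0) + (if k = e1 then S e1 else 0)
        + (if k = e2 then S e2 else 0) := by
    intro k
    by_cases hk0 : k = e0
    · have vk : (k : ℕ) = 0 := by rw [hk0, v0]
      have ck : c k = -2 := by rw [hc]; simp only [vk]; simp
      rw [ck, hk0, if_pos rfl, if_neg ne01, if_neg ne02]
      ring
    · by_cases hk1 : k = e1
      · have vk : (k : ℕ) = 1 := by rw [hk1, v1]
        have ck : c k = 1 := by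
          rw [hc]; simp only [vk]
          rw [if_neg (by omega)]; simp
        rw [ck, hk1, if_neg (fun h => ne01 h.symm), if_pos rfl, if_neg ne12]
        ring
      · by_cases hk2 : k = e2
        · have vk : (k : ℕ) = n - 1 := by rw [hk2, v2]
          have ck : c k = 1 := by
            rw [hc]; simp only [vk]
            rw [if_neg (by omega)]; simp
          rw [ck, hk2, if_neg (fun h => ne02 h.symm), if_neg (fun h => ne12 h.symm),
            if_pos rfl]
          ring
        · have u0 : (k : ℕ) ≠ 0 := fun h => hk0 (Fin.ext (by rw [h, v0]))
          have u1 : (k : ℕ) ≠ 1 := fun h => hk1 (Fin.ext (by rw [h, v1]))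
          have u2 : (k : ℕ) ≠ n - 1 := fun h => hk2 (Fin.ext (by rw [h, v2]))
          have ck : c k = 0 := by rw [hc]; simp [u0, u1, u2]
          rw [ck, if_neg hk0, if_neg hk1, if_neg hk2]
          ring
  have hsum : ∑ k, c k * S k = -2 * S e0 + S e1 + S e2 := by
    rw [Finset.sum_congr rfl (fun k _ => split k)]
    simp [Finset.sum_add_distrib, Finset.sum_ite_eq']
  have he0 : e0 = 0 := by
    apply Fin.ext; rw [v0, Fin.val_zero]
  have hS0 : S e0 = ∑ i, x i ^ 2 := by
    show (∑ i, x i * x (i - e0)) = _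
    rw [he0]
    exact Finset.sum_congr rfl fun i _ => by rw [sub_zero]; ring
  have h1 : S e1 ≤ ∑ i, x i ^ 2 := S_le n hn x e1
  have h2 : S e2 ≤ ∑ i, x i ^ 2 := S_le n hn x e2
  rw [key, hsum]
  linarith

lemma quad_A (n : ℕ) (hn : 3 ≤ n) (σ : ℝ) (hσ : 0 ≤ σ) (x : Fin n → ℝ) (hx : x ≠ 0) :
    0 < x ⬝ᵥ (Amat n σ).mulVec x := by
  have hL := quad_L n hn x
  have hself : 0 < x ⬝ᵥ x := by
    rcases lt_or_eq_of_le (Finset.sum_nonneg fun i _ => mul_self_nonneg (x i)) with h | h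
    · exact h
    · exact absurd (dotProduct_self_eq_zero.mp h.symm) hx
  have : x ⬝ᵥ (Amat n σ).mulVec x = x ⬝ᵥ x - σ * (x ⬝ᵥ (Lmat n).mulVec x) := by
    rw [Amat, Matrix.sub_mulVec, Matrix.one_mulVec, Matrix.smul_mulVec,
      dotProduct_sub, dotProduct_smul, smul_eq_mul]
  rw [this]
  nlinarith

lemma isUnit_A (n : ℕ) (hn : 3 ≤ n) (σ : ℝ) (hσ : 0 ≤ σ) : IsUnit (Amat n σ) := by
  rw [← Matrix.mulVec_injective_iff_isUnit]
  intro a b hab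
  by_contra hne
  have hsub : (Amat n σ).mulVec (a - b) = 0 := by
    rw [Matrix.mulVec_sub, hab, sub_self]
  have := quad_A n hn σ hσ (a - b) (sub_ne_zero_of_ne hne)
  rw [hsub, dotProduct_zero] at this
  exact lt_irrefl 0 this

lemma Bp_eq (n : ℕ) (hn : 3 ≤ n) (σ : ℝ) (hσ : 0 ≤ σ) (p : Fin n → ℝ) (lam : ℝ)
    (e : ((Amat n σ)⁻¹ * Bmat n).mulVec p = lam • p) :
    (Bmat n).mulVec p = lam • ((Amat n σ).mulVec p) := by
  have hu := isUnit_A n hn σ hσ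
  have hinv : Amat n σ * (Amat n σ)⁻¹ = 1 :=
    Matrix.mul_nonsing_inv _ ((Matrix.isUnit_iff_isUnit_det _).mp hu)
  calc (Bmat n).mulVec p = ((Amat n σ * (Amat n σ)⁻¹) * Bmat n).mulVec p := by
        rw [hinv, Matrix.one_mul]
    _ = (Amat n σ).mulVec (((Amat n σ)⁻¹ * Bmat n).mulVec p) := by
        rw [Matrix.mulVec_mulVec, Matrix.mul_assoc]
    _ = lam • ((Amat n σ).mulVec p) := by rw [e, Matrix.mulVec_smul]

lemma last_dominates (n : ℕ) (hn : 3 ≤ n) (σ : ℝ) (hσ : 0 ≤ σ) (p : Fin n → ℝ)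
    (hp : p ≠ 0) (lam : ℝ) (hlam : lam < 0)
    (e : ((Amat n σ)⁻¹ * Bmat n).mulVec p = lam • p) :
    ∑ i ∈ Finset.univ.erase ⟨n-1, by omega⟩, p i ^ 2 < p ⟨n-1, by omega⟩ ^ 2 := by
  set last : Fin n := ⟨n - 1, by omega⟩ with hlast
  have hB := Bp_eq n hn σ hσ p lam e
  have hQ : p ⬝ᵥ (Bmat n).mulVec p = lam * (p ⬝ᵥ (Amat n σ).mulVec p) := by
    rw [hB, dotProduct_smul, smul_eq_mul]
  have hneg : p ⬝ᵥ (Bmat n).mulVec p < 0 :=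
    hQ ▸ mul_neg_of_neg_of_pos hlam (quad_A n hn σ hσ p hp)
  have hexp : p ⬝ᵥ (Bmat n).mulVec p
      = (∑ i ∈ Finset.univ.erase last, p i ^ 2) - p last ^ 2 := by
    have : ∀ i : Fin n, p i * ((Bmat n).mulVec p i)
        = (if (i : ℕ) = n - 1 then -1 else 1) * p i ^ 2 := by
      intro i
      rw [Bmat, Matrix.mulVec_diagonal]
      ring
    rw [dotProduct, Finset.sum_congr rfl fun i _ => this i]
    rw [← Finset.add_sum_erase _ _ (Finset.mem_univ last)]
    have hlastval : ((last : Fin n) : ℕ) = n - 1 := rfl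
    rw [if_pos hlastval]
    have : ∀ i ∈ Finset.univ.erase last,
        (if (i : ℕ) = n - 1 then (-1:ℝ) else 1) * p i ^ 2 = p i ^ 2 := by
      intro i hi
      have : (i : ℕ) ≠ n - 1 := fun h => (Finset.ne_of_mem_erase hi) (Fin.ext h)
      rw [if_neg this, one_mul]
    rw [Finset.sum_congr rfl this]
    ring
  rw [hexp] at hneg
  linarith

theorem stmt8 (n : ℕ) (hn : 3 ≤ n) (σ₁ σ₂ : ℝ) (h1 : 0 ≤ σ₁) (h2 : 0 ≤ σ₂)
    (hne : σ₁ ≠ σ₂) (p q : Fin n → ℝ) (hp : p ≠ 0) (hq : q ≠ 0)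
    (lam₁ lam₂ : ℝ) (hlam₁ : lam₁ < 0) (hlam₂ : lam₂ < 0)
    (e₁ : ((Amat n σ₁)⁻¹ * Bmat n).mulVec p = lam₁ • p)
    (e₂ : ((Amat n σ₂)⁻¹ * Bmat n).mulVec q = lam₂ • q) :
    p ⬝ᵥ q ≠ 0 := by
  set last : Fin n := ⟨n - 1, by omega⟩ with hlast
  have hpdom := last_dominates n hn σ₁ h1 p hp lam₁ hlam₁ e₁
  have hqdom := last_dominates n hn σ₂ h2 q hq lam₂ hlam₂ e₂
  set s : Finset (Fin n) := Finset.univ.erase last with hs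
  have hCS : (∑ i ∈ s, p i * q i) ^ 2 ≤ (∑ i ∈ s, p i ^ 2) * ∑ i ∈ s, q i ^ 2 :=
    Finset.sum_mul_sq_le_sq_mul_sq s p q
  have hPn : (0:ℝ) ≤ ∑ i ∈ s, p i ^ 2 := Finset.sum_nonneg fun i _ => sq_nonneg _
  have hQn : (0:ℝ) ≤ ∑ i ∈ s, q i ^ 2 := Finset.sum_nonneg fun i _ => sq_nonneg _
  have hsplit : p ⬝ᵥ q = p last * q last + ∑ i ∈ s, p i * q i := by
    rw [dotProduct, ← Finset.add_sum_erase _ _ (Finset.mem_univ last)]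
  intro h
  rw [hsplit] at h
  have key : (∑ i ∈ s, p i ^ 2) * (∑ i ∈ s, q i ^ 2) < p last ^ 2 * q last ^ 2 :=
    calc (∑ i ∈ s, p i ^ 2) * (∑ i ∈ s, q i ^ 2)
        ≤ (∑ i ∈ s, p i ^ 2) * q last ^ 2 := by
          exact mul_le_mul_of_nonneg_left hqdom.le hPn
      _ < p last ^ 2 * q last ^ 2 :=
          mul_lt_mul_of_pos_right hpdom (lt_of_le_of_lt hQn hqdom)
  have hab : ∑ i ∈ s, p i * q i = -(p last * q last) := by linarith
  have hsq : (∑ i ∈ s, p i * q i) ^ 2 = p last ^ 2 * q last ^ 2 := by rw [hab]; ring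
  linarith [hCS, key, hsq]
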